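/- Fix b > 0 and define for a > 0 the limit excess f(a) = √(a² + b²)·E(a/√(a² + b²)) − (b²/√(a² + b²))·K(a/√(a² + b²)), where K and E are the complete elliptic integrals of the first and second kind. Then, as a → 0⁺, f(a) = (π a²)/(4b) − (3π a⁴)/(32 b³) + (15π a⁶)/(256 b⁵) + O(a⁸); that is, the function a ↦ f(a) − ((π a²)/(4b) − (3π a⁴)/(32 b³) + (15π a⁶)/(256 b⁵)) is O(a⁸) as a → 0⁺. -/

import Mathlib

set_option maxHeartbeats 1000000

open Real Filter Asymptotics

/-- Complete elliptic integral of the first kind. -/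
noncomputable def ellipticK (k : ℝ) : ℝ :=
  ∫ θ in (0:ℝ)..(π / 2), 1 / Real.sqrt (1 - k ^ 2 * Real.sin θ ^ 2)

/-- Complete elliptic integral of the second kind. -/
noncomputable def ellipticE (k : ℝ) : ℝ :=
  ∫ θ in (0:ℝ)..(π / 2), Real.sqrt (1 - k ^ 2 * Real.sin θ ^ 2)

private lemma excess_key (b : ℝ) (hb : 0 < b) (u : ℝ) (hu : 0 ≤ u) (hub : u ≤ b^2) :
    |u / Real.sqrt (b^2 + u) - (u/b - u^2/(2*b^3) + 3*u^3/(8*b^5))| ≤ u^4 / b^7 := by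
  set s := Real.sqrt (b^2 + u) with hs
  have hs2 : s^2 = b^2 + u := Real.sq_sqrt (by positivity)
  have hsb : b ≤ s := by
    rw [hs]
    calc b = Real.sqrt (b^2) := by rw [Real.sqrt_sq hb.le]
    _ ≤ _ := Real.sqrt_le_sqrt (by linarith)
  have hs0 : 0 < s := lt_of_lt_of_le hb hsb
  have hQ : 0 < 8*b^4 - 4*b^2*u + 3*u^2 := by
    nlinarith [sq_nonneg (3*u - 2*b^2), pow_pos hb 4]
  have hX0 : 0 < s * (8*b^4 - 4*b^2*u + 3*u^2) := mul_pos hs0 hQ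
  have hexp : (s * (8*b^4 - 4*b^2*u + 3*u^2))^2
      = 64*b^10 + u^3*(40*b^4 - 15*b^2*u + 9*u^2) := by
    rw [mul_pow, hs2]; ring
  have h40 : 0 ≤ 40*b^4 - 15*b^2*u + 9*u^2 := by
    nlinarith [sq_nonneg (6*u - 5*b^2), pow_pos hb 4]
  have hu3 : 0 ≤ u^3 := pow_nonneg hu 3
  have hX2 : (8*b^5)^2 ≤ (s * (8*b^4 - 4*b^2*u + 3*u^2))^2 := by
    rw [hexp]; nlinarith [mul_nonneg hu3 h40]
  have hC0 : (0:ℝ) < 8*b^5 := by positivity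
  have h1 : 8*b^5 ≤ s * (8*b^4 - 4*b^2*u + 3*u^2) := by
    nlinarith [hX2, mul_pos hX0 hC0]
  have hkey : (s * (8*b^4 - 4*b^2*u + 3*u^2) - 8*b^5) * (s * (8*b^4 - 4*b^2*u + 3*u^2) + 8*b^5)
      = u^3 * (40*b^4 - 15*b^2*u + 9*u^2) := by
    nlinarith [hexp]
  have hR : 40*b^4 - 15*b^2*u + 9*u^2 ≤ 49*b^4 := by nlinarith [mul_nonneg (mul_nonneg hb.le hb.le) hu]
  have h2 : b^2 * (s * (8*b^4 - 4*b^2*u + 3*u^2) - 8*b^5) ≤ 8 * s * u^3 := by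
    have hXC : (0:ℝ) < s * (8*b^4 - 4*b^2*u + 3*u^2) + 8*b^5 := by linarith
    have hA : b^2 * (u^3 * (40*b^4 - 15*b^2*u + 9*u^2)) ≤ 49 * b^6 * u^3 := by
      nlinarith [mul_nonneg (mul_nonneg (mul_nonneg hb.le hb.le) hu3) (sub_nonneg.mpr hR)]
    have hB : 49 * b^6 * u^3 ≤ (8 * s * u^3) * (s * (8*b^4 - 4*b^2*u + 3*u^2) + 8*b^5) := by
      have h49 : 49 * b^6 * u^3 ≤ (8 * b * u^3) * (16*b^5) := by
        nlinarith [mul_nonneg (pow_nonneg hb.le 6) hu3]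
      refine h49.trans (mul_le_mul ?_ (by linarith) (by positivity) (by positivity))
      nlinarith [mul_nonneg hu3 (sub_nonneg.mpr hsb)]
    have hchain : (b^2 * (s * (8*b^4 - 4*b^2*u + 3*u^2) - 8*b^5))
        * (s * (8*b^4 - 4*b^2*u + 3*u^2) + 8*b^5)
        ≤ (8 * s * u^3) * (s * (8*b^4 - 4*b^2*u + 3*u^2) + 8*b^5) := by
      calc (b^2 * (s * (8*b^4 - 4*b^2*u + 3*u^2) - 8*b^5))
            * (s * (8*b^4 - 4*b^2*u + 3*u^2) + 8*b^5)
          = b^2 * (u^3 * (40*b^4 - 15*b^2*u + 9*u^2)) := by rw [mul_assoc, hkey]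
        _ ≤ 49 * b^6 * u^3 := hA
        _ ≤ _ := hB
    exact le_of_mul_le_mul_right hchain hXC
  -- now conclude
  rw [abs_le]
  constructor
  · rw [neg_le, neg_sub]
    have hP : u/b - u^2/(2*b^3) + 3*u^3/(8*b^5) = u*(8*b^4 - 4*b^2*u + 3*u^2)/(8*b^5) := by
      field_simp; ring
    rw [hP, div_sub_div _ _ (by positivity : (8*b^5:ℝ) ≠ 0) hs0.ne',
      div_le_div_iff₀ (by positivity) (by positivity)]
    nlinarith [mul_le_mul_of_nonneg_left h2 (mul_nonneg hu (pow_nonneg hb.le 5))]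
  · have : u / s - (u/b - u^2/(2*b^3) + 3*u^3/(8*b^5)) ≤ 0 := by
      have hP : u/b - u^2/(2*b^3) + 3*u^3/(8*b^5) = u*(8*b^4 - 4*b^2*u + 3*u^2)/(8*b^5) := by
        field_simp; ring
      rw [hP, sub_nonpos, div_le_div_iff₀ hs0 (by positivity)]
      nlinarith [mul_nonneg hu (sub_nonneg.mpr h1)]
    have : (0:ℝ) ≤ u^4/b^7 := by positivity
    linarith

private lemma excess_f_repr (b : ℝ) (hb : 0 < b) (a : ℝ) :
    Real.sqrt (a^2+b^2) * ellipticE (a / Real.sqrt (a^2+b^2))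
      - b^2 / Real.sqrt (a^2+b^2) * ellipticK (a / Real.sqrt (a^2+b^2))
    = ∫ θ in (0:ℝ)..(π/2), a^2 * Real.cos θ^2 / Real.sqrt (b^2 + a^2 * Real.cos θ^2) := by
  set S := Real.sqrt (a^2+b^2) with hS
  have hS2 : S^2 = a^2+b^2 := Real.sq_sqrt (by positivity)
  have hS0 : 0 < S := by rw [hS]; positivity
  have hk2 : ∀ θ : ℝ, 1 - (a/S)^2 * Real.sin θ^2 = (b^2 + a^2*Real.cos θ^2)/S^2 := by
    intro θ
    have hpyth := Real.sin_sq_add_cos_sq θ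
    field_simp
    nlinarith [hS2, hpyth]
  have hpos : ∀ θ : ℝ, 0 < 1 - (a/S)^2 * Real.sin θ^2 := by
    intro θ
    rw [hk2 θ]
    have : 0 < b^2 + a^2*Real.cos θ^2 := by positivity
    positivity
  have hptwise : ∀ θ : ℝ,
      S * Real.sqrt (1 - (a/S)^2 * Real.sin θ^2)
        - b^2/S * (1 / Real.sqrt (1 - (a/S)^2 * Real.sin θ^2))
      = a^2 * Real.cos θ^2 / Real.sqrt (b^2 + a^2 * Real.cos θ^2) := by
    intro θ
    have hw0 : 0 < b^2 + a^2*Real.cos θ^2 := by positivity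
    have hw : Real.sqrt (1 - (a/S)^2 * Real.sin θ^2)
        = Real.sqrt (b^2 + a^2*Real.cos θ^2) / S := by
      rw [hk2 θ, Real.sqrt_div hw0.le, Real.sqrt_sq hS0.le]
    rw [hw]
    have hw1 : 0 < Real.sqrt (b^2 + a^2*Real.cos θ^2) := Real.sqrt_pos.mpr hw0
    have hw2 : Real.sqrt (b^2 + a^2*Real.cos θ^2) ^ 2 = b^2 + a^2*Real.cos θ^2 :=
      Real.sq_sqrt hw0.le
    field_simp
    rw [hw2]; ring
  have hcontE : Continuous fun θ : ℝ => S * Real.sqrt (1 - (a/S)^2 * Real.sin θ^2) := by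
    fun_prop
  have hcontK : Continuous fun θ : ℝ => b^2/S * (1 / Real.sqrt (1 - (a/S)^2 * Real.sin θ^2)) := by
    apply Continuous.mul continuous_const
    apply Continuous.div continuous_const (by fun_prop)
    intro θ
    exact (Real.sqrt_pos.mpr (hpos θ)).ne'
  rw [ellipticE, ellipticK, ← intervalIntegral.integral_const_mul,
    ← intervalIntegral.integral_const_mul,
    ← intervalIntegral.integral_sub (hcontE.intervalIntegrable _ _) (hcontK.intervalIntegrable _ _)]
  exact intervalIntegral.integral_congr fun θ _ => hptwise θ

private lemma excess_poly_int (b a : ℝ) :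
    (∫ θ in (0:ℝ)..(π/2),
        ((a^2/b) * Real.cos θ^2 - (a^4/(2*b^3)) * Real.cos θ^4
          + (3*a^6/(8*b^5)) * Real.cos θ^6))
    = π * a^2/(4*b) - 3*π*a^4/(32*b^3) + 15*π*a^6/(256*b^5) := by
  have i2 : ∫ θ in (0:ℝ)..(π/2), Real.cos θ^2 = π/4 := by simp; ring
  have i4 : ∫ θ in (0:ℝ)..(π/2), Real.cos θ^4 = 3*π/16 := by
    have h := integral_cos_pow (a := (0:ℝ)) (b := π/2) 2
    simp at h
    rw [h]; ring
  have i6 : ∫ θ in (0:ℝ)..(π/2), Real.cos θ^6 = 15*π/96 := by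
    have h2 := integral_cos_pow (a := (0:ℝ)) (b := π/2) 2
    have h4 := integral_cos_pow (a := (0:ℝ)) (b := π/2) 4
    simp at h2 h4
    rw [h4, h2]; ring
  rw [intervalIntegral.integral_add, intervalIntegral.integral_sub,
    intervalIntegral.integral_const_mul, intervalIntegral.integral_const_mul,
    intervalIntegral.integral_const_mul, i2, i4, i6]
  · ring
  all_goals apply Continuous.intervalIntegrable; fun_prop

/-- Maclaurin's series for the limit hyperbolic excess: as `a → 0⁺`,
`f(a) = πa²/(4b) − 3πa⁴/(32b³) + 15πa⁶/(256b⁵) + O(a⁸)`. -/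
theorem maclaurin_excess_expansion (b : ℝ) (hb : 0 < b)
    (f : ℝ → ℝ)
    (hf : ∀ a : ℝ, f a =
      Real.sqrt (a ^ 2 + b ^ 2) * ellipticE (a / Real.sqrt (a ^ 2 + b ^ 2))
        - b ^ 2 / Real.sqrt (a ^ 2 + b ^ 2) * ellipticK (a / Real.sqrt (a ^ 2 + b ^ 2))) :
    (fun a : ℝ => f a -
        (π * a ^ 2 / (4 * b) - 3 * π * a ^ 4 / (32 * b ^ 3)
          + 15 * π * a ^ 6 / (256 * b ^ 5)))
      =O[nhdsWithin 0 (Set.Ioi 0)] fun a : ℝ => a ^ 8 := by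
  rw [isBigO_iff]
  refine ⟨π/2 * (1/b^7), ?_⟩
  filter_upwards [Ioo_mem_nhdsGT_of_mem (Set.mem_Ico.mpr ⟨le_refl 0, hb⟩)] with a ha
  obtain ⟨ha0, hab⟩ := ha
  have hbound : ∀ θ : ℝ,
      |a^2 * Real.cos θ^2 / Real.sqrt (b^2 + a^2 * Real.cos θ^2)
        - ((a^2/b) * Real.cos θ^2 - (a^4/(2*b^3)) * Real.cos θ^4
            + (3*a^6/(8*b^5)) * Real.cos θ^6)| ≤ a^8/b^7 := by
    intro θ
    have hc : Real.cos θ^2 ≤ 1 := by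
      nlinarith [Real.sin_sq_add_cos_sq θ, sq_nonneg (Real.sin θ)]
    have hc0 : 0 ≤ Real.cos θ^2 := sq_nonneg _
    have hu0 : 0 ≤ a^2 * Real.cos θ^2 := by positivity
    have hub : a^2 * Real.cos θ^2 ≤ b^2 := by nlinarith [sq_nonneg a]
    have h := excess_key b hb (a^2 * Real.cos θ^2) hu0 hub
    have heq : (a^2 * Real.cos θ^2)/b - (a^2 * Real.cos θ^2)^2/(2*b^3)
        + 3*(a^2 * Real.cos θ^2)^3/(8*b^5)
        = (a^2/b) * Real.cos θ^2 - (a^4/(2*b^3)) * Real.cos θ^4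
          + (3*a^6/(8*b^5)) * Real.cos θ^6 := by ring
    rw [heq] at h
    refine h.trans ?_
    have h4 : (a^2 * Real.cos θ^2)^4 ≤ a^8 := by
      have he : (a^2 * Real.cos θ^2)^4 = a^8 * (Real.cos θ^2)^4 := by ring
      rw [he]
      exact mul_le_of_le_one_right (by positivity) (pow_le_one₀ hc0 hc)
    exact div_le_div_of_nonneg_right h4 (by positivity)
  -- integrability of each piece
  have hcont1 : Continuous fun θ : ℝ =>
      a^2 * Real.cos θ^2 / Real.sqrt (b^2 + a^2 * Real.cos θ^2) := by
    apply Continuous.div (by fun_prop) (by fun_prop)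
    intro θ
    have : (0:ℝ) < b^2 + a^2 * Real.cos θ^2 := by positivity
    exact (Real.sqrt_pos.mpr this).ne'
  have hcont2 : Continuous fun θ : ℝ =>
      (a^2/b) * Real.cos θ^2 - (a^4/(2*b^3)) * Real.cos θ^4
        + (3*a^6/(8*b^5)) * Real.cos θ^6 := by fun_prop
  have hdiff : f a -
      (π * a ^ 2 / (4 * b) - 3 * π * a ^ 4 / (32 * b ^ 3) + 15 * π * a ^ 6 / (256 * b ^ 5))
      = ∫ θ in (0:ℝ)..(π/2),
          (a^2 * Real.cos θ^2 / Real.sqrt (b^2 + a^2 * Real.cos θ^2)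
            - ((a^2/b) * Real.cos θ^2 - (a^4/(2*b^3)) * Real.cos θ^4
                + (3*a^6/(8*b^5)) * Real.cos θ^6)) := by
    rw [intervalIntegral.integral_sub (hcont1.intervalIntegrable _ _)
      (hcont2.intervalIntegrable _ _), excess_poly_int b a, hf a, excess_f_repr b hb a]
  rw [hdiff]
  have hnorm := intervalIntegral.norm_integral_le_of_norm_le_const
    (C := a^8/b^7) (a := (0:ℝ)) (b := π/2)
    (f := fun θ => a^2 * Real.cos θ^2 / Real.sqrt (b^2 + a^2 * Real.cos θ^2)
            - ((a^2/b) * Real.cos θ^2 - (a^4/(2*b^3)) * Real.cos θ^4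
                + (3*a^6/(8*b^5)) * Real.cos θ^6))
    (fun x _ => hbound x)
  refine hnorm.trans_eq ?_
  rw [Real.norm_eq_abs, abs_of_pos (pow_pos ha0 8), sub_zero,
    abs_of_pos (by positivity : (0:ℝ) < π/2)]
  ring
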